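/- Let M, N, t be positive integers with 1 ≤ t ≤ N, and let η > 0 satisfy η²·t = 32·log(8N²M). Let B* = {0, 1/(MN), 2/(MN), …, (N−1)/(MN)}. Then there exists a set B ⊆ {0, 1, …, N−1} with |B| = t such that for every x ∈ {0, 1, …, N−1} and every integer k with 0 ≤ k < MN, |S_{B(x)}(k)/t − S_{B*}(k)/N| ≤ η, where B(x) = { ((x+y) mod N)/(MN) : y ∈ B }. -/

import Mathlib

open Complex Real Finset

/-- The exponential sum `S_E(k) = ∑_{e ∈ E} e^{-2πike}` of a finite set `E ⊆ ℝ`. -/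
noncomputable def expSum (E : Finset ℝ) (k : ℤ) : ℂ :=
  ∑ e ∈ E, Complex.exp (-(2 * Real.pi * Complex.I * k * e))

lemma exp_quad {u : ℝ} (hu : |u| ≤ 1) : Real.exp u ≤ 1 + u + 3/4 * u ^ 2 := by
  have h := Real.exp_bound hu (by norm_num : 0 < 2)
  have h2 : |Real.exp u - (1 + u)| ≤ u ^ 2 * (3 / 4) := by
    norm_num [Finset.sum_range_succ, Nat.factorial] at h
    convert h using 2
  have h3 := (abs_le.mp h2).2
  nlinarith [_root_.sq_abs u]

lemma factor_bound {p lam x : ℝ} (hp0 : 0 ≤ p) (hp1 : p ≤ 1) (hl0 : 0 ≤ lam)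
    (hl1 : lam ≤ 1) (hx : |x| ≤ 1) :
    p * Real.exp (lam * (1 - p) * x) + (1 - p) * Real.exp (-(lam * p * x)) ≤
      Real.exp (3 / 4 * p * lam ^ 2) := by
  have hux : |lam * x| ≤ 1 := by
    rw [abs_mul]
    calc |lam| * |x| ≤ 1 * 1 := by
          apply mul_le_mul _ hx (abs_nonneg x) zero_le_one
          rwa [_root_.abs_of_nonneg hl0]
      _ = 1 := by ring
  have h1 : Real.exp (lam * x) ≤ 1 + lam * x + 3 / 4 * (lam * x) ^ 2 := exp_quad hux
  have key : p * Real.exp (lam * (1 - p) * x) + (1 - p) * Real.exp (-(lam * p * x))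
      = Real.exp (-(lam * p * x)) * (1 + p * (Real.exp (lam * x) - 1)) := by
    rw [show lam * (1 - p) * x = lam * x + -(lam * p * x) by ring, Real.exp_add]
    ring
  rw [key]
  have h2 : 1 + p * (Real.exp (lam * x) - 1) ≤ Real.exp (p * (Real.exp (lam * x) - 1)) := by
    linarith [Real.add_one_le_exp (p * (Real.exp (lam * x) - 1))]
  calc Real.exp (-(lam * p * x)) * (1 + p * (Real.exp (lam * x) - 1))
      ≤ Real.exp (-(lam * p * x)) * Real.exp (p * (Real.exp (lam * x) - 1)) := by
        apply mul_le_mul_of_nonneg_left h2 (Real.exp_nonneg _)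
    _ = Real.exp (-(lam * p * x) + p * (Real.exp (lam * x) - 1)) := (Real.exp_add _ _).symm
    _ ≤ Real.exp (3 / 4 * p * lam ^ 2) := by
        apply Real.exp_le_exp.mpr
        have hx2 : x ^ 2 ≤ 1 := by nlinarith [_root_.sq_abs x, abs_nonneg x]
        nlinarith [mul_le_mul_of_nonneg_left h1 hp0, sq_nonneg lam,
          mul_le_mul_of_nonneg_left hx2 (mul_nonneg hp0 (sq_nonneg lam))]

/-- Bernoulli product weight. -/
noncomputable def bweight (p : ℝ) {n : ℕ} (ω : Fin n → Bool) : ℝ :=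
  ∏ i, (if ω i then p else 1 - p)

/-- Centered linear statistic. -/
noncomputable def bdev (p : ℝ) {n : ℕ} (ω : Fin n → Bool) (a : Fin n → ℝ) : ℝ :=
  ∑ i, ((if ω i then (1:ℝ) else 0) - p) * a i

lemma bweight_nonneg {p : ℝ} (hp0 : 0 ≤ p) (hp1 : p ≤ 1) {n : ℕ} (ω : Fin n → Bool) :
    0 ≤ bweight p ω :=
  Finset.prod_nonneg (fun i _ => by split <;> linarith)

lemma bweight_sum (p : ℝ) (n : ℕ) : ∑ ω : Fin n → Bool, bweight p ω = 1 := by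
  classical
  unfold bweight
  rw [show (∑ ω : Fin n → Bool, ∏ i, (if ω i then p else 1 - p))
      = ∏ i : Fin n, ∑ b : Bool, (if b then p else 1 - p) from
    (Fintype.prod_sum (fun (_ : Fin n) (b : Bool) => if b then p else 1 - p)).symm]
  have : ∀ _i : Fin n, (∑ b : Bool, (if b then p else 1 - p)) = 1 := by
    intro i
    rw [Fintype.sum_bool]
    norm_num
  rw [Finset.prod_congr rfl (fun i _ => this i), Finset.prod_const_one]

lemma bdev_neg (p : ℝ) {n : ℕ} (ω : Fin n → Bool) (a : Fin n → ℝ) :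
    bdev p ω (fun i => -(a i)) = -bdev p ω a := by
  unfold bdev
  rw [← Finset.sum_neg_distrib]
  exact Finset.sum_congr rfl fun i _ => by ring

lemma chernoff {n : ℕ} (p : ℝ) (hp0 : 0 ≤ p) (hp1 : p ≤ 1) (a : Fin n → ℝ)
    (ha : ∀ i, |a i| ≤ 1) (lam s : ℝ) (hl0 : 0 ≤ lam) (hl1 : lam ≤ 1) :
    ∑ ω : Fin n → Bool, (if s ≤ bdev p ω a then bweight p ω else 0)
      ≤ Real.exp (-(lam * s) + 3 / 4 * n * p * lam ^ 2) := by
  classical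
  unfold bdev bweight
  have hw0 : ∀ ω : Fin n → Bool, 0 ≤ ∏ i, (if ω i then p else 1 - p) := fun ω =>
    Finset.prod_nonneg (fun i _ => by split <;> linarith)
  set f : Fin n → Bool → ℝ := fun i b => (if b then p else 1 - p) *
    Real.exp (lam * (((if b then (1:ℝ) else 0) - p) * a i)) with hf
  have step1 : ∀ ω : Fin n → Bool,
      (if s ≤ ∑ i, ((if ω i then (1:ℝ) else 0) - p) * a i
        then ∏ i, (if ω i then p else 1 - p) else 0)
        ≤ Real.exp (lam * ((∑ i, ((if ω i then (1:ℝ) else 0) - p) * a i) - s)) *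
            ∏ i, (if ω i then p else 1 - p) := by
    intro ω
    split
    · next h =>
        nth_rewrite 1 [← one_mul (∏ i, (if ω i then p else 1 - p))]
        exact mul_le_mul_of_nonneg_right
          (Real.one_le_exp (mul_nonneg hl0 (by linarith))) (hw0 ω)
    · exact mul_nonneg (Real.exp_nonneg _) (hw0 ω)
  calc ∑ ω : Fin n → Bool, (if s ≤ ∑ i, ((if ω i then (1:ℝ) else 0) - p) * a i
        then ∏ i, (if ω i then p else 1 - p) else 0)
      ≤ ∑ ω : Fin n → Bool,
          Real.exp (lam * ((∑ i, ((if ω i then (1:ℝ) else 0) - p) * a i) - s)) *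
            ∏ i, (if ω i then p else 1 - p) :=
        Finset.sum_le_sum (fun ω _ => step1 ω)
    _ = Real.exp (-(lam * s)) * ∑ ω : Fin n → Bool, ∏ i, f i (ω i) := by
        rw [Finset.mul_sum]
        refine Finset.sum_congr rfl fun ω _ => ?_
        have e1 : lam * ((∑ i, ((if ω i then (1:ℝ) else 0) - p) * a i) - s)
            = -(lam * s) + ∑ i, lam * (((if ω i then (1:ℝ) else 0) - p) * a i) := by
          rw [mul_sub, Finset.mul_sum]
          ring
        rw [e1, Real.exp_add, Real.exp_sum, hf]
        simp only []
        rw [Finset.prod_mul_distrib]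
        ring
    _ = Real.exp (-(lam * s)) * ∏ i, (f i true + f i false) := by
        congr 1
        rw [show (∑ ω : Fin n → Bool, ∏ i, f i (ω i)) = ∏ i, ∑ b : Bool, f i b from
          (Fintype.prod_sum f).symm]
        refine Finset.prod_congr rfl fun i _ => ?_
        simp
    _ ≤ Real.exp (-(lam * s)) * ∏ _i : Fin n, Real.exp (3 / 4 * p * lam ^ 2) := by
        apply mul_le_mul_of_nonneg_left _ (Real.exp_nonneg _)
        apply Finset.prod_le_prod
        · intro i _
          rw [hf]
          simp only [Bool.false_eq_true, reduceIte]
          have e1 := Real.exp_nonneg (lam * ((1 - p) * a i))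
          have e2 := Real.exp_nonneg (lam * ((0 - p) * a i))
          nlinarith
        · intro i _
          have h := factor_bound hp0 hp1 hl0 hl1 (ha i)
          rw [hf]
          simp only [Bool.false_eq_true, reduceIte]
          rw [show lam * (((1:ℝ) - p) * a i) = lam * (1 - p) * a i by ring,
            show lam * (((0:ℝ) - p) * a i) = -(lam * p * a i) by ring]
          exact h
    _ = Real.exp (-(lam * s) + 3 / 4 * n * p * lam ^ 2) := by
        rw [Finset.prod_const, ← Real.exp_nat_mul, ← Real.exp_add]
        congr 1
        simp [Finset.card_univ]
        ring

lemma abs_exp_term (k : ℤ) (r : ℝ) :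
    ‖Complex.exp (-(2 * (Real.pi:ℂ) * Complex.I * k * r))‖ = 1 := by
  rw [show (-(2 * (Real.pi:ℂ) * Complex.I * k * r)) = ((-(2 * Real.pi * k * r) : ℝ) : ℂ) *
    Complex.I by push_cast; ring]
  exact Complex.norm_exp_ofReal_mul_I _

lemma expSum_abs_le (E : Finset ℝ) (k : ℤ) : ‖expSum E k‖ ≤ E.card := by
  unfold expSum
  refine (norm_sum_le _ _).trans ?_
  calc ∑ e ∈ E, ‖Complex.exp (-(2 * (Real.pi:ℂ) * Complex.I * k * e))‖
      = ∑ _e ∈ E, (1:ℝ) := Finset.sum_congr rfl fun e _ => abs_exp_term k e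
    _ = E.card := by simp
  exact le_refl _

lemma abs_sum_le_card (s : Finset ℕ) (g : ℕ → ℂ) (h : ∀ y, ‖g y‖ = 1) :
    ‖∑ y ∈ s, g y‖ ≤ s.card := by
  refine (norm_sum_le _ _).trans ?_
  calc ∑ y ∈ s, ‖g y‖ = ∑ _y ∈ s, (1:ℝ) := Finset.sum_congr rfl fun y _ => h y
    _ = s.card := by simp
  exact le_refl _

lemma mod_shift_inj {N : ℕ} (hN : 0 < N) (x : ℕ) : ∀ i ∈ Finset.range N,
    ∀ j ∈ Finset.range N, (x + i) % N = (x + j) % N → i = j := by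
  intro i hi j hj h
  simp only [Finset.mem_range] at hi hj
  have h2 : i % N = j % N := Nat.ModEq.add_left_cancel' x h
  rwa [Nat.mod_eq_of_lt hi, Nat.mod_eq_of_lt hj] at h2

lemma sum_mod_shift {β : Type*} [AddCommMonoid β] {N : ℕ} (hN : 0 < N) (x : ℕ) (f : ℕ → β) :
    ∑ i ∈ Finset.range N, f ((x + i) % N) = ∑ i ∈ Finset.range N, f i := by
  have himg : (Finset.range N).image (fun i => (x + i) % N) = Finset.range N := by
    apply Finset.eq_of_subset_of_card_le
    · intro j hj
      simp only [Finset.mem_image, Finset.mem_range] at hj ⊢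
      obtain ⟨i, _, rfl⟩ := hj
      exact Nat.mod_lt _ hN
    · rw [Finset.card_image_of_injOn (mod_shift_inj hN x), Finset.card_range]
  calc ∑ i ∈ Finset.range N, f ((x + i) % N)
      = ∑ j ∈ (Finset.range N).image (fun i => (x + i) % N), f j :=
        (Finset.sum_image (mod_shift_inj hN x)).symm
    _ = ∑ j ∈ Finset.range N, f j := by rw [himg]

lemma exists_good {α : Type*} [Fintype α] (w : α → ℝ) (G : α → Prop) [DecidablePred G]
    (hsum : ∑ x : α, w x = 1) (hbad : ∑ x : α, (if G x then 0 else w x) < 1) :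
    ∃ x, G x := by
  classical
  by_contra h
  push_neg at h
  have heq : ∑ x : α, (if G x then (0:ℝ) else w x) = ∑ x : α, w x :=
    Finset.sum_congr rfl fun x _ => by rw [if_neg (h x)]
  rw [heq, hsum] at hbad
  exact lt_irrefl 1 hbad

lemma sqrt2_lt : Real.sqrt 2 ≤ 10 / 7 := by
  nlinarith [Real.sq_sqrt (show (0:ℝ) ≤ 2 by norm_num), Real.sqrt_nonneg 2]

lemma sqrt2_combine {e T : ℝ} (he : 0 ≤ e) (hT : 0 ≤ T) :
    Real.sqrt 2 * (7 / 20 * e * T) + e * T / 2 ≤ e * T := by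
  nlinarith [sqrt2_lt, mul_nonneg he hT, Real.sqrt_nonneg 2]

lemma l2bound {z : ℂ} {s : ℝ} (hs : 0 ≤ s) (hre : |z.re| ≤ s) (him : |z.im| ≤ s) :
    ‖z‖ ≤ Real.sqrt 2 * s := by
  have hsq : ‖z‖ ^ 2 = z.re ^ 2 + z.im ^ 2 := by
    rw [Complex.sq_norm, Complex.normSq_apply]
    ring
  have h1 : z.re ^ 2 ≤ s ^ 2 := by
    rw [← _root_.sq_abs z.re]
    exact pow_le_pow_left₀ (abs_nonneg _) hre 2
  have h2 : z.im ^ 2 ≤ s ^ 2 := by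
    rw [← _root_.sq_abs z.im]
    exact pow_le_pow_left₀ (abs_nonneg _) him 2
  have h3 : ‖z‖ ^ 2 ≤ 2 * s ^ 2 := by rw [hsq]; linarith
  calc ‖z‖ = Real.sqrt (‖z‖ ^ 2) :=
        (Real.sqrt_sq (norm_nonneg z)).symm
    _ ≤ Real.sqrt (2 * s ^ 2) := Real.sqrt_le_sqrt h3
    _ = Real.sqrt 2 * s := by rw [Real.sqrt_mul (by norm_num), Real.sqrt_sq hs]

lemma count_numeric {Mr Nr : ℝ} (hM1 : 1 ≤ Mr) (hN1 : 1 ≤ Nr) :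
    Nr * (Mr * Nr) * 4 + 2 ≤ 3 / 4 * (8 * Nr ^ 2 * Mr) := by
  nlinarith

set_option maxHeartbeats 2000000 in
/-- Lemma 5.2 (Łaba–Pramanik, Lemma 6.2): there is a `t`-element set `B` such that
all translates `B(x)` have exponential sums uniformly `η`-close to that of `B*`. -/
theorem good_translate_set_exists (M N t : ℕ) (η : ℝ)
    (hM : 0 < M) (hN : 0 < N) (ht₁ : 1 ≤ t) (ht₂ : t ≤ N) (hη : 0 < η)
    (hηt : η ^ 2 * t = 32 * Real.log (8 * N ^ 2 * M)) :
    ∃ B : Finset ℕ, B ⊆ Finset.range N ∧ B.card = t ∧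
      ∀ x ∈ Finset.range N, ∀ k : ℕ, k < M * N →
        ‖(expSum (B.image (fun y : ℕ => (((x + y) % N : ℕ) : ℝ) / (M * N))) k / t -
             expSum ((Finset.range N).image (fun i : ℕ => (i : ℝ) / (M * N))) k / N)‖ ≤
          η := by
  classical
  have htR : (0:ℝ) < t := by exact_mod_cast ht₁
  have hNR : (0:ℝ) < N := by exact_mod_cast hN
  have hMR : (0:ℝ) < M := by exact_mod_cast hM
  have hN1 : (1:ℝ) ≤ N := by exact_mod_cast hN
  have hM1 : (1:ℝ) ≤ M := by exact_mod_cast hM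
  have tri : ∀ X Y : ℂ, ‖X - Y‖ ≤ ‖X‖ + ‖Y‖ := fun X Y => by
    simpa [sub_eq_add_neg] using norm_add_le X (-Y)
  by_cases hη3 : 3 < η
  · -- trivial case: the bound 2 ≤ η suffices
    refine ⟨Finset.range t, Finset.range_subset_range.mpr ht₂, Finset.card_range t, ?_⟩
    intro x _ k _
    have h1 : ∀ (E : Finset ℝ) (m : ℕ), E.card ≤ m → (0:ℝ) < m →
        ‖expSum E k / m‖ ≤ 1 := by
      intro E m hc hm
      rw [norm_div, Complex.norm_natCast, div_le_one hm]
      exact (expSum_abs_le E k).trans (by exact_mod_cast hc)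
    have hA := h1 ((Finset.range t).image fun y : ℕ => (((x + y) % N : ℕ) : ℝ) / (M * N)) t
      (le_trans Finset.card_image_le (le_of_eq (Finset.card_range t))) htR
    have hB := h1 ((Finset.range N).image fun i : ℕ => (i : ℝ) / (M * N)) N
      (le_trans Finset.card_image_le (le_of_eq (Finset.card_range N))) hNR
    have := tri (expSum ((Finset.range t).image
        (fun y : ℕ => (((x + y) % N : ℕ) : ℝ) / (M * N))) k / t)
      (expSum ((Finset.range N).image (fun i : ℕ => (i : ℝ) / (M * N))) k / N)
    linarith
  push_neg at hη3
  -- main case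
  set L : ℝ := Real.log (8 * N ^ 2 * M) with hLdef
  have hL : η ^ 2 * t = 32 * L := hηt
  have hLpos : 0 < L := by
    have h0 : (0:ℝ) < η ^ 2 * t := by positivity
    linarith
  have hTpos : (0:ℝ) < 8 * N ^ 2 * M := by positivity
  have hexpL : Real.exp (-L) = 1 / (8 * N ^ 2 * M) := by
    rw [hLdef, Real.exp_neg, Real.exp_log hTpos, one_div]
  set p : ℝ := t / N with hpdef
  have hp0 : 0 ≤ p := by positivity
  have hp1 : p ≤ 1 := by rw [hpdef, div_le_one hNR]; exact_mod_cast ht₂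
  have hNp : (N:ℝ) * p = t := by rw [hpdef]; field_simp
  -- the complex unit terms
  set G : ℕ → ℕ → ℕ → ℂ := fun x k y =>
    Complex.exp (-(2 * (Real.pi:ℂ) * Complex.I * ((k:ℤ):ℂ) *
      ((((x + y) % N : ℕ) : ℝ) / ((M:ℝ) * (N:ℝ)) : ℝ))) with hG
  have hGabs : ∀ x k y, ‖G x k y‖ = 1 := fun x k y => abs_exp_term _ _
  set aRe : ℕ → ℕ → Fin N → ℝ := fun x k i => (G x k i.val).re with haRe
  set aIm : ℕ → ℕ → Fin N → ℝ := fun x k i => (G x k i.val).im with haIm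
  have haReb : ∀ x k i, |aRe x k i| ≤ 1 := fun x k i => by
    rw [haRe]
    calc |(G x k i.val).re| ≤ ‖G x k i.val‖ := Complex.abs_re_le_norm _
      _ = 1 := hGabs x k i.val
  have haImb : ∀ x k i, |aIm x k i| ≤ 1 := fun x k i => by
    rw [haIm]
    calc |(G x k i.val).im| ≤ ‖G x k i.val‖ := Complex.abs_im_le_norm _
      _ = 1 := hGabs x k i.val
  -- thresholds
  set sM : ℝ := 7 / 20 * η * t with hsM
  set sC : ℝ := η * t / 2 with hsC
  have hsM0 : 0 ≤ sM := by rw [hsM]; positivity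
  -- generic event bound
  have hEvent : ∀ (a : Fin N → ℝ), (∀ i, |a i| ≤ 1) → ∀ lam s : ℝ, 0 ≤ lam → lam ≤ 1 →
      -(lam * s) + 3 / 4 * N * p * lam ^ 2 ≤ -L →
      ∑ ω : Fin N → Bool, (if s ≤ bdev p ω a then bweight p ω else 0) ≤ Real.exp (-L) := by
    intro a ha lam s hl0 hl1 hexpo
    exact (chernoff p hp0 hp1 a ha lam s hl0 hl1).trans (Real.exp_le_exp.mpr hexpo)
  have hNpl : ∀ lam : ℝ, 3 / 4 * (N:ℝ) * p * lam ^ 2 = 3 / 4 * t * lam ^ 2 := by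
    intro lam
    rw [show (3:ℝ) / 4 * N * p = 3 / 4 * ((N:ℝ) * p) by ring, hNp]
  have hbMain : ∀ (a : Fin N → ℝ), (∀ i, |a i| ≤ 1) →
      ∑ ω : Fin N → Bool, (if sM ≤ bdev p ω a then bweight p ω else 0) ≤ Real.exp (-L) := by
    intro a ha
    refine hEvent a ha (7 / 30 * η) sM (by positivity) (by linarith) ?_
    rw [hNpl, hsM]
    nlinarith [hLpos, hL]
  have hbCard : ∀ (a : Fin N → ℝ), (∀ i, |a i| ≤ 1) →
      ∑ ω : Fin N → Bool, (if sC ≤ bdev p ω a then bweight p ω else 0) ≤ Real.exp (-L) := by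
    intro a ha
    refine hEvent a ha (η / 3) sC (by positivity) (by linarith) ?_
    rw [hNpl, hsC]
    nlinarith [hLpos, hL]
  -- the index set and the good event
  set I : Finset (ℕ × ℕ) := Finset.range N ×ˢ Finset.range (M * N) with hI
  set Good : (Fin N → Bool) → Prop := fun ω =>
    (∀ q ∈ I, bdev p ω (aRe q.1 q.2) < sM ∧ bdev p ω (fun i => -(aRe q.1 q.2 i)) < sM ∧
      bdev p ω (aIm q.1 q.2) < sM ∧ bdev p ω (fun i => -(aIm q.1 q.2 i)) < sM) ∧
    bdev p ω (fun _ => (1:ℝ)) < sC ∧ bdev p ω (fun _ => (-1:ℝ)) < sC with hGood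
  set F : (Fin N → Bool) → ℝ := fun ω =>
    (∑ q ∈ I, ((if sM ≤ bdev p ω (aRe q.1 q.2) then bweight p ω else 0) +
      (if sM ≤ bdev p ω (fun i => -(aRe q.1 q.2 i)) then bweight p ω else 0) +
      (if sM ≤ bdev p ω (aIm q.1 q.2) then bweight p ω else 0) +
      (if sM ≤ bdev p ω (fun i => -(aIm q.1 q.2 i)) then bweight p ω else 0))) +
    (if sC ≤ bdev p ω (fun _ => (1:ℝ)) then bweight p ω else 0) +
    (if sC ≤ bdev p ω (fun _ => (-1:ℝ)) then bweight p ω else 0) with hF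
  have hw0 : ∀ ω : Fin N → Bool, 0 ≤ bweight p ω := fun ω => bweight_nonneg hp0 hp1 ω
  have hT0 : ∀ (ω : Fin N → Bool) (q : ℕ × ℕ),
      0 ≤ (if sM ≤ bdev p ω (aRe q.1 q.2) then bweight p ω else 0) +
      (if sM ≤ bdev p ω (fun i => -(aRe q.1 q.2 i)) then bweight p ω else 0) +
      (if sM ≤ bdev p ω (aIm q.1 q.2) then bweight p ω else 0) +
      (if sM ≤ bdev p ω (fun i => -(aIm q.1 q.2 i)) then bweight p ω else 0) := by
    intro ω q
    have h := hw0 ω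
    split_ifs <;> linarith
  have claimA : ∀ ω : Fin N → Bool, (if Good ω then (0:ℝ) else bweight p ω) ≤ F ω := by
    intro ω
    have hF0 : 0 ≤ F ω := by
      simp only [hF]
      have h1 := Finset.sum_nonneg (fun q (_ : q ∈ I) => hT0 ω q)
      have h := hw0 ω
      split_ifs <;> linarith
    by_cases hg : Good ω
    · rw [if_pos hg]; exact hF0
    · rw [if_neg hg]
      rw [hGood] at hg
      simp only [not_and_or] at hg
      have key : ∀ q ∈ I, ∀ (b : ℝ),
          (b = bdev p ω (aRe q.1 q.2) ∨ b = bdev p ω (fun i => -(aRe q.1 q.2 i)) ∨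
           b = bdev p ω (aIm q.1 q.2) ∨ b = bdev p ω (fun i => -(aIm q.1 q.2 i))) →
          sM ≤ b → bweight p ω ≤ F ω := by
        intro q hq b hb hsb
        have hterm : bweight p ω ≤
            (if sM ≤ bdev p ω (aRe q.1 q.2) then bweight p ω else 0) +
            (if sM ≤ bdev p ω (fun i => -(aRe q.1 q.2 i)) then bweight p ω else 0) +
            (if sM ≤ bdev p ω (aIm q.1 q.2) then bweight p ω else 0) +
            (if sM ≤ bdev p ω (fun i => -(aIm q.1 q.2 i)) then bweight p ω else 0) := by
          have h := hw0 ω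
          rcases hb with rfl | rfl | rfl | rfl
          · rw [if_pos hsb]; split_ifs <;> linarith
          · rw [if_pos hsb]; split_ifs <;> linarith
          · rw [if_pos hsb]; split_ifs <;> linarith
          · rw [if_pos hsb]; split_ifs <;> linarith
        refine hterm.trans ?_
        simp only [hF]
        have hsing := Finset.single_le_sum (fun q (_ : q ∈ I) => hT0 ω q) hq
        have h2 : (0:ℝ) ≤ (if sC ≤ bdev p ω (fun _ => (1:ℝ)) then bweight p ω else 0) := by
          split_ifs
          · exact hw0 ω
          · exact le_rfl
        have h3 : (0:ℝ) ≤ (if sC ≤ bdev p ω (fun _ => (-1:ℝ)) then bweight p ω else 0) := by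
          split_ifs
          · exact hw0 ω
          · exact le_rfl
        linarith
      rcases hg with hg | hg | hg
      · rw [not_forall] at hg
        obtain ⟨q, hq2⟩ := hg
        rw [Classical.not_imp] at hq2
        obtain ⟨hq, hfail⟩ := hq2
        simp only [not_and_or, not_lt] at hfail
        rcases hfail with h | h | h | h
        · exact key q hq _ (Or.inl rfl) h
        · exact key q hq _ (Or.inr (Or.inl rfl)) h
        · exact key q hq _ (Or.inr (Or.inr (Or.inl rfl))) h
        · exact key q hq _ (Or.inr (Or.inr (Or.inr rfl))) h
      · rw [not_lt] at hg
        simp only [hF]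
        have h1 := Finset.sum_nonneg (fun q (_ : q ∈ I) => hT0 ω q)
        have h := hw0 ω
        rw [if_pos hg]
        split_ifs <;> linarith
      · rw [not_lt] at hg
        simp only [hF]
        have h1 := Finset.sum_nonneg (fun q (_ : q ∈ I) => hT0 ω q)
        have h := hw0 ω
        rw [if_pos hg]
        split_ifs <;> linarith
  -- union bound
  have claimB : ∑ ω : Fin N → Bool, F ω ≤ ((N:ℝ) * (M * N) * 4 + 2) * Real.exp (-L) := by
    have hqb : ∀ q ∈ I,
        (∑ ω : Fin N → Bool, ((if sM ≤ bdev p ω (aRe q.1 q.2) then bweight p ω else 0) +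
          (if sM ≤ bdev p ω (fun i => -(aRe q.1 q.2 i)) then bweight p ω else 0) +
          (if sM ≤ bdev p ω (aIm q.1 q.2) then bweight p ω else 0) +
          (if sM ≤ bdev p ω (fun i => -(aIm q.1 q.2 i)) then bweight p ω else 0)))
          ≤ 4 * Real.exp (-L) := by
      intro q _
      rw [Finset.sum_add_distrib, Finset.sum_add_distrib, Finset.sum_add_distrib]
      have b1 := hbMain (aRe q.1 q.2) (haReb q.1 q.2)
      have b2 := hbMain (fun i => -(aRe q.1 q.2 i))
        (fun i => by rw [abs_neg]; exact haReb q.1 q.2 i)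
      have b3 := hbMain (aIm q.1 q.2) (haImb q.1 q.2)
      have b4 := hbMain (fun i => -(aIm q.1 q.2 i))
        (fun i => by rw [abs_neg]; exact haImb q.1 q.2 i)
      linarith
    have b5 := hbCard (fun _ => (1:ℝ)) (fun i => by norm_num)
    have b6 := hbCard (fun _ => (-1:ℝ)) (fun i => by norm_num)
    have hIcard : (I.card : ℝ) = (N:ℝ) * (M * N) := by
      rw [hI, Finset.card_product, Finset.card_range, Finset.card_range]
      push_cast
      ring
    calc ∑ ω : Fin N → Bool, F ω
        = (∑ ω : Fin N → Bool, ∑ q ∈ I,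
            ((if sM ≤ bdev p ω (aRe q.1 q.2) then bweight p ω else 0) +
            (if sM ≤ bdev p ω (fun i => -(aRe q.1 q.2 i)) then bweight p ω else 0) +
            (if sM ≤ bdev p ω (aIm q.1 q.2) then bweight p ω else 0) +
            (if sM ≤ bdev p ω (fun i => -(aIm q.1 q.2 i)) then bweight p ω else 0))) +
          (∑ ω : Fin N → Bool, (if sC ≤ bdev p ω (fun _ => (1:ℝ)) then bweight p ω else 0)) +
          (∑ ω : Fin N → Bool, (if sC ≤ bdev p ω (fun _ => (-1:ℝ)) then bweight p ω else 0)) := by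
          simp only [hF]
          rw [Finset.sum_add_distrib, Finset.sum_add_distrib]
      _ ≤ (∑ _q ∈ I, 4 * Real.exp (-L)) + Real.exp (-L) + Real.exp (-L) := by
          have := Finset.sum_comm (s := (Finset.univ : Finset (Fin N → Bool))) (t := I)
            (f := fun ω q =>
              ((if sM ≤ bdev p ω (aRe q.1 q.2) then bweight p ω else 0) +
              (if sM ≤ bdev p ω (fun i => -(aRe q.1 q.2 i)) then bweight p ω else 0) +
              (if sM ≤ bdev p ω (aIm q.1 q.2) then bweight p ω else 0) +
              (if sM ≤ bdev p ω (fun i => -(aIm q.1 q.2 i)) then bweight p ω else 0)))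
          rw [this]
          have hsum1 := Finset.sum_le_sum hqb
          linarith [b5, b6]
      _ = (I.card : ℝ) * (4 * Real.exp (-L)) + Real.exp (-L) + Real.exp (-L) := by
          rw [Finset.sum_const, nsmul_eq_mul]
      _ ≤ ((N:ℝ) * (M * N) * 4 + 2) * Real.exp (-L) := by
          rw [hIcard]
          exact le_of_eq (by ring)
  have hbadlt : ∑ ω : Fin N → Bool, (if Good ω then (0:ℝ) else bweight p ω) < 1 := by
    have h1 := Finset.sum_le_sum (fun ω (_ : ω ∈ (Finset.univ : Finset (Fin N → Bool))) =>
      claimA ω)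
    have h2 : ((N:ℝ) * (M * N) * 4 + 2) * Real.exp (-L) ≤ 3 / 4 := by
      rw [hexpL, mul_one_div, div_le_iff₀ hTpos]
      have := count_numeric hM1 hN1
      push_cast
      push_cast at this
      linarith
    linarith [claimB]
  obtain ⟨ω, hGoodω⟩ := exists_good (fun ω : Fin N → Bool => bweight p ω) Good
    (bweight_sum p N) hbadlt
  simp only [hGood] at hGoodω
  obtain ⟨hmain, hc1, hc2⟩ := hGoodω
  -- the random set
  set B₀ : Finset ℕ := (Finset.univ.filter (fun i : Fin N => ω i)).image Fin.val with hB₀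
  have hB₀sub : B₀ ⊆ Finset.range N := by
    intro y hy
    simp only [hB₀, Finset.mem_image] at hy
    obtain ⟨i, _, rfl⟩ := hy
    exact Finset.mem_range.mpr i.isLt
  set n₀ := (Finset.univ.filter (fun i : Fin N => ω i)).card with hn₀
  have hB₀card : B₀.card = n₀ := Finset.card_image_of_injective _ Fin.val_injective
  -- cardinality deviation
  have hdev1 : bdev p ω (fun _ => (1:ℝ)) = (n₀:ℝ) - t := by
    unfold bdev
    simp only [mul_one]
    rw [Finset.sum_sub_distrib, Finset.sum_boole, Finset.sum_const, Finset.card_univ,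
      Fintype.card_fin, nsmul_eq_mul, hNp, hn₀]
  have hdev2 : bdev p ω (fun _ => (-1:ℝ)) = -((n₀:ℝ) - t) := by
    rw [show (fun _ : Fin N => (-1:ℝ)) = (fun i : Fin N => -((fun _ : Fin N => (1:ℝ)) i))
      from rfl, bdev_neg, hdev1]
  rw [hsC] at hc1 hc2
  rw [hdev1] at hc1
  rw [hdev2] at hc2
  have habs : |(n₀:ℝ) - t| ≤ η * t / 2 := abs_le.mpr ⟨by linarith, by linarith⟩
  have hn₀N : n₀ ≤ N := by
    rw [hn₀]
    calc (Finset.univ.filter (fun i : Fin N => ω i)).card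
        ≤ (Finset.univ : Finset (Fin N)).card := Finset.card_filter_le _ _
      _ = N := by simp
  -- construct B with exactly t elements
  obtain ⟨B, hBsub, hBcard, hΔ⟩ : ∃ B : Finset ℕ, B ⊆ Finset.range N ∧ B.card = t ∧
      ∀ g : ℕ → ℂ, (∀ y, ‖g y‖ = 1) →
        ‖(∑ y ∈ B, g y) - ∑ y ∈ B₀, g y‖ ≤ η * t / 2 := by
    rcases le_or_gt n₀ t with hcase | hcase
    · obtain ⟨B, hB₀B, hBsub, hBcard'⟩ := Finset.exists_subsuperset_card_eq (n := t - n₀ + B₀.card) hB₀sub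
        (by omega) (by rw [hB₀card, Finset.card_range]; omega)
      have hBcard : B.card = t := by rw [hBcard', hB₀card]; omega
      refine ⟨B, hBsub, hBcard, ?_⟩
      intro g hg
      have hsd := Finset.sum_sdiff (f := g) hB₀B
      rw [show (∑ y ∈ B, g y) - ∑ y ∈ B₀, g y = ∑ y ∈ B \ B₀, g y by rw [← hsd]; ring]
      refine (abs_sum_le_card _ g hg).trans ?_
      rw [Finset.card_sdiff_of_subset hB₀B, hBcard, hB₀card, Nat.cast_sub hcase]
      linarith [abs_le.mp habs]
    · obtain ⟨B, hBB₀, hBcard⟩ := Finset.exists_subset_card_eq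
        (show t ≤ B₀.card by rw [hB₀card]; omega)
      refine ⟨B, hBB₀.trans hB₀sub, hBcard, ?_⟩
      intro g hg
      have hsd := Finset.sum_sdiff (f := g) hBB₀
      rw [show (∑ y ∈ B, g y) - ∑ y ∈ B₀, g y = -(∑ y ∈ B₀ \ B, g y) by rw [← hsd]; ring]
      rw [norm_neg]
      refine (abs_sum_le_card _ g hg).trans ?_
      rw [Finset.card_sdiff_of_subset hBB₀, hBcard, hB₀card, Nat.cast_sub hcase.le]
      linarith [abs_le.mp habs]
  refine ⟨B, hBsub, hBcard, ?_⟩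
  intro x hx k hk
  have hqI : (x, k) ∈ I := by
    rw [hI]
    exact Finset.mem_product.mpr ⟨hx, Finset.mem_range.mpr hk⟩
  obtain ⟨g1, g2, g3, g4⟩ := hmain (x, k) hqI
  dsimp only at g1 g2 g3 g4
  -- injectivity facts
  have hMN0 : ((M:ℝ) * N) ≠ 0 := by positivity
  have hinjB : ∀ y ∈ B, ∀ z ∈ B,
      (((x + y) % N : ℕ) : ℝ) / ((M:ℝ) * N) = (((x + z) % N : ℕ) : ℝ) / ((M:ℝ) * N) →
        y = z := by
    intro y hy z hz h
    rw [div_eq_div_iff hMN0 hMN0] at h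
    have h2 : (((x + y) % N : ℕ) : ℝ) = (((x + z) % N : ℕ) : ℝ) :=
      mul_right_cancel₀ hMN0 h
    have h3 : (x + y) % N = (x + z) % N := Nat.cast_injective h2
    exact mod_shift_inj hN x y (hBsub hy) z (hBsub hz) h3
  have hinjStar : ∀ y ∈ Finset.range N, ∀ z ∈ Finset.range N,
      (y:ℝ) / ((M:ℝ) * N) = (z:ℝ) / ((M:ℝ) * N) → y = z := by
    intro y _ z _ h
    rw [div_eq_div_iff hMN0 hMN0] at h
    have h2 : (y:ℝ) = z := mul_right_cancel₀ hMN0 h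
    exact_mod_cast h2
  set SB := ∑ y ∈ B, G x k y with hSB
  set S0 := ∑ y ∈ B₀, G x k y with hS0
  set Sstar := ∑ j ∈ Finset.range N, Complex.exp (-(2 * (Real.pi:ℂ) * Complex.I * ((k:ℤ):ℂ) *
    (((j:ℝ) / ((M:ℝ) * (N:ℝ)) : ℝ) : ℂ))) with hSstar
  have e1 : expSum (B.image (fun y : ℕ => (((x + y) % N : ℕ) : ℝ) / (M * N))) (k:ℤ) = SB := by
    unfold expSum
    rw [Finset.sum_image hinjB, hSB, hG]
  have e2 : expSum ((Finset.range N).image (fun i : ℕ => (i:ℝ) / (M * N))) (k:ℤ) = Sstar := by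
    unfold expSum
    rw [Finset.sum_image hinjStar, hSstar]
  have eshift : ∑ y ∈ Finset.range N, G x k y = Sstar := by
    rw [hSstar, hG]
    exact sum_mod_shift hN x (fun j => Complex.exp (-(2 * (Real.pi:ℂ) * Complex.I *
      ((k:ℤ):ℂ) * (((j:ℝ) / ((M:ℝ) * (N:ℝ)) : ℝ) : ℂ))))
  set D := ∑ i : Fin N, ((((if ω i then (1:ℝ) else 0) - p : ℝ)) : ℂ) * G x k i.val with hD
  have e3 : S0 = D + (p:ℂ) * Sstar := by
    rw [hS0, hB₀, Finset.sum_image (fun a _ b _ h => Fin.val_injective h), Finset.sum_filter,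
      ← eshift, ← Fin.sum_univ_eq_sum_range (fun i => G x k i), hD, Finset.mul_sum,
      ← Finset.sum_add_distrib]
    refine Finset.sum_congr rfl fun i _ => ?_
    by_cases hωi : ω i = true
    · rw [if_pos hωi, if_pos hωi]
      push_cast
      ring
    · rw [if_neg hωi, if_neg hωi]
      push_cast
      ring
  have hDre : D.re = bdev p ω (aRe x k) := by
    rw [hD, Complex.re_sum]
    unfold bdev
    exact Finset.sum_congr rfl fun i _ => by rw [Complex.re_ofReal_mul, haRe]
  have hDim : D.im = bdev p ω (aIm x k) := by
    rw [hD, Complex.im_sum]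
    unfold bdev
    exact Finset.sum_congr rfl fun i _ => by rw [Complex.im_ofReal_mul, haIm]
  have hg2' : -bdev p ω (aRe x k) < sM := by rw [← bdev_neg]; exact g2
  have hg4' : -bdev p ω (aIm x k) < sM := by rw [← bdev_neg]; exact g4
  have hDreAbs : |D.re| ≤ sM := by
    rw [hDre]
    exact abs_le.mpr ⟨by linarith, g1.le⟩
  have hDimAbs : |D.im| ≤ sM := by
    rw [hDim]
    exact abs_le.mpr ⟨by linarith, g3.le⟩
  have habsD : ‖D‖ ≤ Real.sqrt 2 * sM := l2bound hsM0 hDreAbs hDimAbs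
  have hΔB := hΔ (G x k) (hGabs x k)
  have e4 : (p:ℂ) = (t:ℂ) / (N:ℂ) := by
    rw [hpdef]
    push_cast
    ring
  have htC : (t:ℂ) ≠ 0 := Nat.cast_ne_zero.mpr (by omega)
  have hNC : (N:ℂ) ≠ 0 := Nat.cast_ne_zero.mpr hN.ne'
  rw [e1, e2]
  have emain : SB / (t:ℂ) - Sstar / (N:ℂ) = D / (t:ℂ) + (SB - S0) / (t:ℂ) := by
    have hDval : D = S0 - (p:ℂ) * Sstar := by rw [e3]; ring
    rw [hDval, e4]
    field_simp
    ring
  rw [emain]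
  calc ‖D / (t:ℂ) + (SB - S0) / (t:ℂ)‖
      ≤ ‖D / (t:ℂ)‖ + ‖(SB - S0) / (t:ℂ)‖ := norm_add_le _ _
    _ = ‖D‖ / (t:ℝ) + ‖SB - S0‖ / (t:ℝ) := by
        rw [norm_div, norm_div, Complex.norm_natCast]
    _ ≤ (Real.sqrt 2 * sM) / (t:ℝ) + (η * t / 2) / (t:ℝ) := by gcongr
    _ ≤ η := by
        rw [hsM, ← add_div, div_le_iff₀ htR]
        linarith [sqrt2_combine hη.le htR.le]
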